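/- Every chain of class T_0 is obtained from [4] by a finite sequence of the two operations [b_1,…,b_r] ↦ [2, b_1, …, b_{r−1}, b_r+1] and [b_1,…,b_r] ↦ [b_1+1, b_2, …, b_r, 2]. -/

import Mathlib

/-- Hirzebruch–Jung continued fraction of a list: `hj [b₁,…,bᵣ] = b₁ - 1/hj [b₂,…,bᵣ]`. -/
def hj : List ℚ → ℚ
  | [] => 0
  | [b] => b
  | b :: l => b - 1 / hj l


/-- A chain of integers ≥ 2 is of class T₀ if its HJ continued fraction equals
`n²/(na-1)` for some coprime integers `n > a ≥ 1`. -/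
def IsClassT0 (l : List ℤ) : Prop :=
  (∀ b ∈ l, 2 ≤ b) ∧ ∃ n a : ℤ, 1 ≤ a ∧ a < n ∧ Int.gcd n a = 1 ∧
    hj (l.map (fun b => (b : ℚ))) = (n ^ 2 : ℚ) / (n * a - 1)


/-- Chains of class T₀ generated from [4] by the two KSB operations. -/
inductive GenT0 : List ℤ → Prop
  | base : GenT0 [4]
  | left (l : List ℤ) (h : l ≠ []) : GenT0 l →
      GenT0 (2 :: (l.dropLast ++ [l.getLast h + 1]))
  | right (l : List ℤ) (h : l ≠ []) : GenT0 l →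
      GenT0 ((l.head h + 1) :: (l.tail ++ [2]))

/-- Every chain of class T₀ is obtained from [4] by a finite sequence of the
two operations [b₁,…,bᵣ] ↦ [2,b₁,…,b_{r-1},bᵣ+1] and
[b₁,…,bᵣ] ↦ [b₁+1,b₂,…,bᵣ,2]. -/

def ksbM (b : ℤ) : Matrix (Fin 2) (Fin 2) ℤ := !![b, -1; 1, 0]

def ksbMat (l : List ℤ) : Matrix (Fin 2) (Fin 2) ℤ := (l.map ksbM).prod

lemma ksbMat_nil : ksbMat [] = 1 := rfl

lemma ksbMat_cons (b : ℤ) (l : List ℤ) : ksbMat (b :: l) = ksbM b * ksbMat l := by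
  simp [ksbMat]

lemma ksbMat_concat (l : List ℤ) (b : ℤ) : ksbMat (l ++ [b]) = ksbMat l * ksbM b := by
  simp [ksbMat]

lemma mul00 (A B : Matrix (Fin 2) (Fin 2) ℤ) : (A * B) 0 0 = A 0 0 * B 0 0 + A 0 1 * B 1 0 := by
  simp [Matrix.mul_apply, Fin.sum_univ_two]

lemma mul10 (A B : Matrix (Fin 2) (Fin 2) ℤ) : (A * B) 1 0 = A 1 0 * B 0 0 + A 1 1 * B 1 0 := by
  simp [Matrix.mul_apply, Fin.sum_univ_two]

lemma mul01 (A B : Matrix (Fin 2) (Fin 2) ℤ) : (A * B) 0 1 = A 0 0 * B 0 1 + A 0 1 * B 1 1 := by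
  simp [Matrix.mul_apply, Fin.sum_univ_two]

lemma mul11 (A B : Matrix (Fin 2) (Fin 2) ℤ) : (A * B) 1 1 = A 1 0 * B 0 1 + A 1 1 * B 1 1 := by
  simp [Matrix.mul_apply, Fin.sum_univ_two]

lemma ksbM00 (b : ℤ) : ksbM b 0 0 = b := rfl
lemma ksbM01 (b : ℤ) : ksbM b 0 1 = -1 := rfl
lemma ksbM10 (b : ℤ) : ksbM b 1 0 = 1 := rfl
lemma ksbM11 (b : ℤ) : ksbM b 1 1 = 0 := rfl

lemma ksbMat_cons00 (b : ℤ) (l : List ℤ) :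
    ksbMat (b :: l) 0 0 = b * ksbMat l 0 0 - ksbMat l 1 0 := by
  rw [ksbMat_cons, mul00, ksbM00, ksbM01]; ring

lemma ksbMat_cons10 (b : ℤ) (l : List ℤ) :
    ksbMat (b :: l) 1 0 = ksbMat l 0 0 := by
  rw [ksbMat_cons, mul10, ksbM10, ksbM11]; ring

lemma ksbMat_concat00 (l : List ℤ) (b : ℤ) :
    ksbMat (l ++ [b]) 0 0 = b * ksbMat l 0 0 + ksbMat l 0 1 := by
  rw [ksbMat_concat, mul00, ksbM00, ksbM10]; ring

lemma ksbMat_concat10 (l : List ℤ) (b : ℤ) :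
    ksbMat (l ++ [b]) 1 0 = b * ksbMat l 1 0 + ksbMat l 1 1 := by
  rw [ksbMat_concat, mul10, ksbM00, ksbM10]; ring

lemma ksbMat_concat01 (l : List ℤ) (b : ℤ) :
    ksbMat (l ++ [b]) 0 1 = -ksbMat l 0 0 := by
  rw [ksbMat_concat, mul01, ksbM01, ksbM11]; ring

lemma ksbMat_concat11 (l : List ℤ) (b : ℤ) :
    ksbMat (l ++ [b]) 1 1 = -ksbMat l 1 0 := by
  rw [ksbMat_concat, mul11, ksbM01, ksbM11]; ring

lemma ksb_det (l : List ℤ) :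
    ksbMat l 0 0 * ksbMat l 1 1 - ksbMat l 0 1 * ksbMat l 1 0 = 1 := by
  have : (ksbMat l).det = 1 := by
    induction l with
    | nil => simp [ksbMat_nil]
    | cons b t ih =>
      rw [ksbMat_cons, Matrix.det_mul, ih, mul_one]
      simp [ksbM, Matrix.det_fin_two_of]
  rwa [Matrix.det_fin_two] at this

lemma ksbMat_cons01 (b : ℤ) (l : List ℤ) :
    ksbMat (b :: l) 0 1 = b * ksbMat l 0 1 - ksbMat l 1 1 := by
  rw [ksbMat_cons, mul01, ksbM00, ksbM01]; ring

lemma ksbMat_cons11 (b : ℤ) (l : List ℤ) :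
    ksbMat (b :: l) 1 1 = ksbMat l 0 1 := by
  rw [ksbMat_cons, mul11, ksbM10, ksbM11]; ring
lemma ksb_bounds (l : List ℤ) (h : ∀ b ∈ l, 2 ≤ b) :
    0 ≤ ksbMat l 1 0 ∧ ksbMat l 1 0 < ksbMat l 0 0 := by
  induction l with
  | nil => simp [ksbMat_nil]
  | cons b t ih =>
    obtain ⟨h1, h2⟩ := ih (fun x hx => h x (List.mem_cons_of_mem _ hx))
    have hb : 2 ≤ b := h b (List.mem_cons_self)
    rw [ksbMat_cons00, ksbMat_cons10]
    constructor <;> nlinarith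

lemma ksb_q_pos (l : List ℤ) (h : ∀ b ∈ l, 2 ≤ b) (hne : l ≠ []) :
    1 ≤ ksbMat l 1 0 := by
  obtain ⟨b, t, rfl⟩ := List.exists_cons_of_ne_nil hne
  rw [ksbMat_cons10]
  have := ksb_bounds t (fun x hx => h x (List.mem_cons_of_mem _ hx))
  omega

lemma ksb_p_pos (l : List ℤ) (h : ∀ b ∈ l, 2 ≤ b) : 1 ≤ ksbMat l 0 0 := by
  have := ksb_bounds l h
  omega

lemma ksb_coprime (l : List ℤ) : IsCoprime (ksbMat l 0 0) (ksbMat l 1 0) :=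
  ⟨ksbMat l 1 1, -(ksbMat l 0 1), by have := ksb_det l; ring_nf; linarith [ksb_det l]⟩

lemma ksbMat_reverse (l : List ℤ) :
    ksbMat l.reverse = !![ksbMat l 0 0, -(ksbMat l 1 0); -(ksbMat l 0 1), ksbMat l 1 1] := by
  induction l with
  | nil => rw [List.reverse_nil, ksbMat_nil]; ext i j; fin_cases i <;> fin_cases j <;> simp
  | cons b t ih =>
    rw [List.reverse_cons, ksbMat_concat, ih]
    ext i j
    fin_cases i <;> fin_cases j <;>
      simp [ksbM, Matrix.mul_apply, Fin.sum_univ_two, ksbMat_cons00, ksbMat_cons10,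
        ksbMat_cons01, ksbMat_cons11] <;> ring

lemma hj_eq (l : List ℤ) (h : ∀ b ∈ l, 2 ≤ b) :
    hj (l.map (fun b => (b : ℚ))) = (ksbMat l 0 0 : ℚ) / (ksbMat l 1 0 : ℚ) := by
  induction l with
  | nil => simp [hj, ksbMat_nil]
  | cons b t ih =>
    match t, ih with
    | [], _ =>
      rw [show ([b] : List ℤ).map (fun b => (b : ℚ)) = [(b : ℚ)] from rfl,
        show hj [(b : ℚ)] = (b : ℚ) from rfl]
      norm_num [ksbMat_cons00, ksbMat_cons10, ksbMat_nil]
    | c :: t', ih =>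
      have h2 : ∀ x ∈ c :: t', 2 ≤ x := fun x hx => h x (List.mem_cons_of_mem _ hx)
      have ih' := ih h2
      have hq : 1 ≤ ksbMat (c :: t') 1 0 := ksb_q_pos _ h2 (by simp)
      have hp : 1 ≤ ksbMat (c :: t') 0 0 := ksb_p_pos _ h2
      have key : hj ((b :: c :: t').map (fun b => (b : ℚ))) =
          (b : ℚ) - 1 / hj ((c :: t').map (fun b => (b : ℚ))) := rfl
      rw [key, ih', ksbMat_cons00 b (c :: t'), ksbMat_cons10 b (c :: t')]
      have hqZ : ksbMat (c :: t') 1 0 ≠ 0 := by omega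
      have hpZ : ksbMat (c :: t') 0 0 ≠ 0 := by omega
      have hqQ : (ksbMat (c :: t') 1 0 : ℚ) ≠ 0 := Int.cast_ne_zero.mpr hqZ
      have hpQ : (ksbMat (c :: t') 0 0 : ℚ) ≠ 0 := Int.cast_ne_zero.mpr hpZ
      push_cast
      field_simp

lemma genT0_reverse {l : List ℤ} (h : GenT0 l) : GenT0 l.reverse := by
  induction h with
  | base => exact GenT0.base
  | left l hne _ ih =>
    have h2 : l.reverse ≠ [] := by simpa using hne
    have key := GenT0.right l.reverse h2 ih
    have e1 : l.reverse.head h2 = l.getLast hne := List.head_reverse h2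
    have e2 : l.reverse.tail = l.dropLast.reverse := (List.tail_reverse (l := l))
    rw [e1, e2] at key
    have : (2 :: (l.dropLast ++ [l.getLast hne + 1])).reverse
        = (l.getLast hne + 1) :: (l.dropLast.reverse ++ [2]) := by
      simp
    rw [this]
    exact key
  | right l hne _ ih =>
    have h2 : l.reverse.reverse ≠ [] := by simpa using hne
    have h2' : l.reverse ≠ [] := by simpa using hne
    have key := GenT0.left l.reverse h2' ih
    have e1 : l.reverse.getLast h2' = l.head hne := List.getLast_reverse h2'
    have e2 : l.reverse.dropLast = l.tail.reverse := by
      have h3 := List.tail_reverse (l := l.reverse)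
      rw [List.reverse_reverse] at h3
      rw [h3, List.reverse_reverse]
    rw [e1, e2] at key
    have : ((l.head hne + 1) :: (l.tail ++ [2])).reverse
        = 2 :: (l.tail.reverse ++ [l.head hne + 1]) := by
      simp
    rw [this]
    exact key

/-- simple entry lemmas for reverse -/
lemma ksb_rev00 (l : List ℤ) : ksbMat l.reverse 0 0 = ksbMat l 0 0 := by
  rw [ksbMat_reverse]; rfl

lemma ksb_rev10 (l : List ℤ) : ksbMat l.reverse 1 0 = -(ksbMat l 0 1) := by
  rw [ksbMat_reverse]; rfl

/-- Extraction: the HJ value determines the matrix entries. -/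
lemma ksb_extract (l : List ℤ) (n a : ℤ) (h2 : ∀ b ∈ l, 2 ≤ b) (hl : l ≠ [])
    (ha : 1 ≤ a) (han : a < n) (hg : IsCoprime n a)
    (hv : hj (l.map (fun b => (b : ℚ))) = (n ^ 2 : ℚ) / (n * a - 1)) :
    ksbMat l 0 0 = n ^ 2 ∧ ksbMat l 1 0 = n * a - 1 := by
  have hn : 2 ≤ n := by omega
  have hd : 1 ≤ n * a - 1 := by nlinarith
  have hq1 : 1 ≤ ksbMat l 1 0 := ksb_q_pos l h2 hl
  have hp1 : 1 ≤ ksbMat l 0 0 := ksb_p_pos l h2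
  rw [hj_eq l h2] at hv
  have hqQ : (ksbMat l 1 0 : ℚ) ≠ 0 := Int.cast_ne_zero.mpr (by omega)
  have hdQ : ((n * a - 1 : ℤ) : ℚ) ≠ 0 := Int.cast_ne_zero.mpr (by omega)
  have hdQ' : (n * a - 1 : ℚ) ≠ 0 := by push_cast at hdQ; exact hdQ
  rw [div_eq_div_iff hqQ hdQ'] at hv
  have hcross : ksbMat l 0 0 * (n * a - 1) = n ^ 2 * ksbMat l 1 0 := by
    exact_mod_cast hv
  have cop1 : IsCoprime (ksbMat l 0 0) (ksbMat l 1 0) := ksb_coprime l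
  have copn : IsCoprime n (n * a - 1) := ⟨a, -1, by ring⟩
  have cop2 : IsCoprime (n ^ 2) (n * a - 1) := copn.pow_left
  have d1 : ksbMat l 0 0 ∣ n ^ 2 :=
    cop1.dvd_of_dvd_mul_right ⟨n * a - 1, by linarith⟩
  have d2 : n ^ 2 ∣ ksbMat l 0 0 :=
    cop2.dvd_of_dvd_mul_right ⟨ksbMat l 1 0, by linarith⟩
  have hp : ksbMat l 0 0 = n ^ 2 := Int.dvd_antisymm (by omega) (by positivity) d1 d2
  refine ⟨hp, ?_⟩
  rw [hp] at hcross
  have hn0 : (n : ℤ) ^ 2 ≠ 0 := by positivity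
  exact (mul_left_cancel₀ hn0 hcross).symm

/-- reverse of a T₀ matrix data -/
lemma ksb_rev_data (l : List ℤ) (n a : ℤ) (h2 : ∀ b ∈ l, 2 ≤ b) (hl : l ≠ [])
    (ha : 1 ≤ a) (han : a < n)
    (hp : ksbMat l 0 0 = n ^ 2) (hq : ksbMat l 1 0 = n * a - 1) :
    ksbMat l.reverse 0 0 = n ^ 2 ∧ ksbMat l.reverse 1 0 = n * (n - a) - 1 := by
  have hn : 2 ≤ n := by omega
  refine ⟨by rw [ksb_rev00, hp], ?_⟩
  have h2r : ∀ b ∈ l.reverse, 2 ≤ b := fun b hb => h2 b (List.mem_reverse.mp hb)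
  have hlr : l.reverse ≠ [] := by simpa using hl
  have hq1 : 1 ≤ ksbMat l.reverse 1 0 := ksb_q_pos l.reverse h2r hlr
  have hqlt : ksbMat l.reverse 1 0 < ksbMat l.reverse 0 0 := (ksb_bounds l.reverse h2r).2
  rw [ksb_rev00, hp] at hqlt
  set q' := ksbMat l.reverse 1 0 with hq'
  have hdet := ksb_det l
  have hr : ksbMat l 0 1 = -q' := by rw [hq', ksb_rev10]; ring
  rw [hp, hq, hr] at hdet
  -- hdet : n^2 * s + q' * (n*a-1) = 1  (as: n^2 * s - (-q')*(n*a-1) = 1)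
  set s := ksbMat l 1 1 with hs
  have key : n ^ 2 * s + q' * (n * a - 1) = 1 := by linarith [hdet]
  set c := n * (n - a) - 1 with hc
  have hcid : c * (n * a - 1) = n ^ 2 * (n * a - a ^ 2 - 1) + 1 := by rw [hc]; ring
  have hdvd : (n ^ 2 : ℤ) ∣ (q' - c) * (n * a - 1) :=
    ⟨-s - (n * a - a ^ 2 - 1), by linarith [hcid, key]⟩
  have copn : IsCoprime n (n * a - 1) := ⟨a, -1, by ring⟩
  have cop2 : IsCoprime (n ^ 2) (n * a - 1) := copn.pow_left
  have hdvd2 : (n ^ 2 : ℤ) ∣ q' - c := cop2.dvd_of_dvd_mul_right hdvd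
  have hc1 : 1 ≤ c := by nlinarith
  have hc2 : c < n ^ 2 := by nlinarith
  have : q' - c = 0 := by
    refine Int.eq_zero_of_abs_lt_dvd hdvd2 ?_
    rw [abs_lt]; constructor <;> nlinarith
  omega

/-- the head of a length-≥2 T₀ chain is 2 iff n < 2a -/
lemma ksb_head_two (b : ℤ) (t : List ℤ) (n a : ℤ)
    (h2 : ∀ x ∈ b :: t, 2 ≤ x) (ht : t ≠ [])
    (ha : 1 ≤ a) (han : a < n)
    (hp : ksbMat (b :: t) 0 0 = n ^ 2) (hq : ksbMat (b :: t) 1 0 = n * a - 1) :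
    b = 2 ↔ n < 2 * a := by
  have h2t : ∀ x ∈ t, 2 ≤ x := fun x hx => h2 x (List.mem_cons_of_mem _ hx)
  have hb : 2 ≤ b := h2 b (List.mem_cons_self)
  have hpt : ksbMat t 0 0 = n * a - 1 := by rw [← hq, ksbMat_cons10]
  have hqt0 : 0 ≤ ksbMat t 1 0 := (ksb_bounds t h2t).1
  have hqtlt : ksbMat t 1 0 < ksbMat t 0 0 := (ksb_bounds t h2t).2
  have hqt1 : 1 ≤ ksbMat t 1 0 := ksb_q_pos t h2t ht
  have hpe : b * (n * a - 1) - ksbMat t 1 0 = n ^ 2 := by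
    rw [← hpt, ← ksbMat_cons00, hp]
  have hn : 2 ≤ n := by omega
  have hpt2 : 2 ≤ n * a - 1 := by omega
  constructor
  · intro hb2
    rw [hb2] at hpe
    nlinarith
  · intro h2a
    by_contra hne
    have hb3 : 3 ≤ b := by omega
    nlinarith

lemma ksb_descend (n : ℤ)
    (ih : ∀ (l : List ℤ) (m c : ℤ), m < n → (∀ b ∈ l, 2 ≤ b) → l ≠ [] → 1 ≤ c → c < m →
      IsCoprime m c → ksbMat l 0 0 = m ^ 2 → ksbMat l 1 0 = m * c - 1 → GenT0 l) :
    ∀ (b : ℤ) (t : List ℤ) (a : ℤ), t ≠ [] → (∀ x ∈ b :: t, 2 ≤ x) → 1 ≤ a → a < n →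
      IsCoprime n a → n < 2 * a → ksbMat (b :: t) 0 0 = n ^ 2 →
      ksbMat (b :: t) 1 0 = n * a - 1 → GenT0 (b :: t) := by
  intro b t a ht h2 ha han hg h2a hp hq
  have h2t : ∀ x ∈ t, 2 ≤ x := fun x hx => h2 x (List.mem_cons_of_mem _ hx)
  have hn3 : 3 ≤ n := by omega
  have hb2 : b = 2 := (ksb_head_two b t n a h2 ht ha han hp hq).mpr h2a
  set d := t.getLast ht with hd
  set s := t.dropLast with hs
  have hts : s ++ [d] = t := List.dropLast_append_getLast ht
  have h2s : ∀ x ∈ s, 2 ≤ x := fun x hx => h2t x (List.mem_of_mem_dropLast hx)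
  have hd2 : 2 ≤ d := h2t d (List.getLast_mem ht)
  have hpt : ksbMat t 0 0 = n * a - 1 := by rw [← hq, ksbMat_cons10]
  have hqt : ksbMat t 1 0 = 2 * (n * a - 1) - n ^ 2 := by
    rw [ksbMat_cons00, hb2, hpt] at hp; linarith
  -- d ≥ 3
  have hd3 : 3 ≤ d := by
    rcases eq_or_lt_of_le hd2 with hd2' | hlt
    · exfalso
      have hbt : (b :: t) ≠ [] := by simp
      have hrev := ksb_rev_data (b :: t) n a h2 hbt ha han hp hq
      set lr := (b :: t).reverse with hlr
      have hlrne : lr ≠ [] := by simp [hlr]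
      have hhead : lr.head hlrne = d := by
        have h1 : (b :: t).reverse.head (by simp) = (b :: t).getLast (by simp) :=
          List.head_reverse _
        rw [List.getLast_cons ht] at h1
        exact h1
      have htail : lr.tail ≠ [] := by
        have : lr.tail.length = t.length := by
          rw [List.length_tail, hlr, List.length_reverse]; simp
        have ht' : t.length ≠ 0 := by simpa using ht
        intro hnil
        rw [hnil] at this
        simp at this
        omega
      have hdec : lr.head hlrne :: lr.tail = lr := List.cons_head_tail hlrne
      have h2r : ∀ x ∈ lr.head hlrne :: lr.tail, 2 ≤ x := by
        rw [hdec]; intro x hx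
        exact h2 x (List.mem_reverse.mp hx)
      have hp' : ksbMat (lr.head hlrne :: lr.tail) 0 0 = n ^ 2 := by rw [hdec]; exact hrev.1
      have hq' : ksbMat (lr.head hlrne :: lr.tail) 1 0 = n * (n - a) - 1 := by
        rw [hdec]; exact hrev.2
      have hiff := ksb_head_two (lr.head hlrne) lr.tail n (n - a) h2r htail
        (by omega) (by omega) hp' hq'
      rw [hhead, ← hd2'] at hiff
      have := hiff.mp rfl
      omega
    · omega
  -- matrix entry bookkeeping
  set ps := ksbMat s 0 0 with hps
  set qs := ksbMat s 1 0 with hqs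
  have e01 : ksbMat t 0 1 = -ps := by rw [← hts, ksbMat_concat01]
  have e11 : ksbMat t 1 1 = -qs := by rw [← hts, ksbMat_concat11]
  have hdet := ksb_det t
  rw [hpt, hqt, e01, e11] at hdet
  -- hdet : (n*a-1) * (-qs) - (-ps) * (2*(n*a-1) - n^2) = 1
  have hps1 : 1 ≤ ps := ksb_p_pos s h2s
  have hpslt : ps < n * a - 1 := by
    have h2r : ∀ x ∈ t.reverse, 2 ≤ x := fun x hx => h2t x (List.mem_reverse.mp hx)
    have hb := (ksb_bounds t.reverse h2r).2
    rw [ksb_rev00, ksb_rev10, hpt, e01] at hb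
    linarith
  have hx01 : 1 ≤ n * a - 1 - a ^ 2 := by
    have h0 : 0 ≤ (a - 1) * (n - a - 1) := mul_nonneg (by omega) (by omega)
    nlinarith
  have ha2 : 1 ≤ a ^ 2 := by nlinarith
  have hid : (n * a - 1 - a ^ 2) * (2 * (n * a - 1) - n ^ 2)
      - (n * a - 1) * (3 * n * a - n ^ 2 - 2 * a ^ 2 - 1) = 1 := by ring
  have cop := ksb_coprime t
  rw [hpt, hqt] at cop
  have hdvd : (n * a - 1) ∣ (ps - (n * a - 1 - a ^ 2)) * (2 * (n * a - 1) - n ^ 2) :=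
    ⟨qs - (3 * n * a - n ^ 2 - 2 * a ^ 2 - 1), by linear_combination hdet - hid⟩
  have hdvd2 : (n * a - 1) ∣ ps - (n * a - 1 - a ^ 2) := cop.dvd_of_dvd_mul_right hdvd
  have hps_eq : ps = n * a - 1 - a ^ 2 := by
    have h0 : ps - (n * a - 1 - a ^ 2) = 0 := by
      refine Int.eq_zero_of_abs_lt_dvd hdvd2 ?_
      rw [abs_lt]; constructor <;> linarith
    linarith
  have hqs_eq : qs = 3 * n * a - n ^ 2 - 2 * a ^ 2 - 1 := by
    have hne : (n * a - 1 : ℤ) ≠ 0 := by nlinarith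
    have : (n * a - 1) * qs = (n * a - 1) * (3 * n * a - n ^ 2 - 2 * a ^ 2 - 1) := by
      rw [hps_eq] at hdet
      linear_combination hid - hdet
    exact mul_left_cancel₀ hne this
  -- the parent chain
  have e00t : ksbMat t 0 0 = d * ps + ksbMat s 0 1 := by rw [← hts, ksbMat_concat00]
  have e10t : ksbMat t 1 0 = d * qs + ksbMat s 1 1 := by rw [← hts, ksbMat_concat10]
  rw [hpt] at e00t
  rw [hqt] at e10t
  have hpt' : ksbMat (s ++ [d - 1]) 0 0 = a ^ 2 := by
    rw [ksbMat_concat00, ← hps]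
    linear_combination -e00t - hps_eq
  have hqt' : ksbMat (s ++ [d - 1]) 1 0 = a * (2 * a - n) - 1 := by
    rw [ksbMat_concat10, ← hqs]
    linear_combination -e10t - hqs_eq
  have h2t' : ∀ x ∈ s ++ [d - 1], 2 ≤ x := by
    intro x hx
    rcases List.mem_append.mp hx with hx | hx
    · exact h2s x hx
    · simp at hx; omega
  have hcop' : IsCoprime a (2 * a - n) := by
    obtain ⟨u, v, huv⟩ := hg
    exact ⟨v + 2 * u, -u, by linear_combination huv⟩
  have hgen : GenT0 (s ++ [d - 1]) :=
    ih (s ++ [d - 1]) a (2 * a - n) han h2t' (by simp) (by omega) (by omega)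
      hcop' hpt' hqt'
  have hG := GenT0.left (s ++ [d - 1]) (by simp) hgen
  have ed : (s ++ [d - 1]).dropLast = s := by simp
  have eg : (s ++ [d - 1]).getLast (by simp) = d - 1 := List.getLast_concat
  rw [ed, eg] at hG
  have : d - 1 + 1 = d := by ring
  rw [this, hts] at hG
  rw [hb2]
  exact hG

lemma ksbNil00 : ksbMat ([] : List ℤ) 0 0 = 1 := by rw [ksbMat_nil]; simp
lemma ksbNil10 : ksbMat ([] : List ℤ) 1 0 = 0 := by rw [ksbMat_nil]; simp [Matrix.one_apply]

lemma ksb_main (k : ℕ) : ∀ (l : List ℤ) (n a : ℤ), n ≤ (k : ℤ) → (∀ b ∈ l, 2 ≤ b) →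
    l ≠ [] → 1 ≤ a → a < n → IsCoprime n a → ksbMat l 0 0 = n ^ 2 →
    ksbMat l 1 0 = n * a - 1 → GenT0 l := by
  induction k with
  | zero => intro l n a hk _ _ ha han _ _ _; exfalso; omega
  | succ k ih =>
    intro l n a hk h2 hl ha han hg hp hq
    obtain ⟨b, t, rfl⟩ := List.exists_cons_of_ne_nil hl
    rcases t with _ | ⟨c, t2⟩
    · -- singleton
      rw [ksbMat_cons10, ksbNil00] at hq
      have ha1 : a = 1 := by nlinarith
      have hn2 : n = 2 := by rw [ha1] at hq; omega
      rw [ksbMat_cons00, ksbNil00, ksbNil10] at hp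
      have hb : b = 4 := by rw [hn2] at hp; linarith
      rw [hb]
      exact GenT0.base
    · have descend := ksb_descend n (fun l' m c' hm h2' hl' hc' hcm' hcop' hp' hq' =>
        ih l' m c' (by omega) h2' hl' hc' hcm' hcop' hp' hq')
      have htne : (c :: t2) ≠ [] := by simp
      have hn2 : 2 ≤ n := by omega
      have hq2 : 2 ≤ n * a - 1 := by
        rw [ksbMat_cons10] at hq
        have h2t : ∀ x ∈ c :: t2, 2 ≤ x := fun x hx => h2 x (List.mem_cons_of_mem _ hx)
        have := (ksb_bounds (c :: t2) h2t).2
        have := ksb_q_pos (c :: t2) h2t htne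
        omega
      rcases lt_trichotomy n (2 * a) with hlt | heq | hgt
      · exact descend b (c :: t2) a htne h2 ha han hg hlt hp hq
      · exfalso
        obtain ⟨u, v, huv⟩ := hg
        rw [heq] at huv
        have hdvd : a ∣ 1 := ⟨2 * u + v, by linear_combination -huv⟩
        have h1 := Int.le_of_dvd one_pos hdvd
        have ha1 : a = 1 := by omega
        rw [ha1, mul_one] at heq hq2
        omega
      · -- use the reverse
        have hbt : (b :: c :: t2) ≠ [] := by simp
        have hrev := ksb_rev_data (b :: c :: t2) n a h2 hbt ha han hp hq
        set lr := (b :: c :: t2).reverse with hlr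
        have hlrne : lr ≠ [] := by simp [hlr]
        have htail : lr.tail ≠ [] := by
          have hlen : lr.tail.length = (c :: t2).length := by
            rw [List.length_tail, hlr, List.length_reverse]; simp
          intro hnil
          rw [hnil] at hlen
          simp at hlen
        have hdec : lr.head hlrne :: lr.tail = lr := List.cons_head_tail hlrne
        have h2r : ∀ x ∈ lr.head hlrne :: lr.tail, 2 ≤ x := by
          rw [hdec]; intro x hx
          exact h2 x (List.mem_reverse.mp hx)
        have hp' : ksbMat (lr.head hlrne :: lr.tail) 0 0 = n ^ 2 := by rw [hdec]; exact hrev.1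
        have hq' : ksbMat (lr.head hlrne :: lr.tail) 1 0 = n * (n - a) - 1 := by
          rw [hdec]; exact hrev.2
        have hcop' : IsCoprime n (n - a) := by
          obtain ⟨u, v, huv⟩ := hg
          exact ⟨u + v, -v, by linear_combination huv⟩
        have hgen : GenT0 (lr.head hlrne :: lr.tail) :=
          descend (lr.head hlrne) lr.tail (n - a) htail h2r (by omega) (by omega)
            hcop' (by omega) hp' hq'
        rw [hdec] at hgen
        have := genT0_reverse hgen
        rw [hlr, List.reverse_reverse] at this
        exact this

theorem stmt_3 (l : List ℤ) (h : IsClassT0 l) : GenT0 l := by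
  obtain ⟨h2, n, a, ha, han, hg, hv⟩ := h
  have hcop : IsCoprime n a := Int.isCoprime_iff_gcd_eq_one.mpr hg
  have hn2 : 2 ≤ n := by omega
  have hdZ : (n * a - 1 : ℤ) ≠ 0 := by nlinarith
  have hl : l ≠ [] := by
    intro hnil
    rw [hnil, show hj (([] : List ℤ).map (fun b => (b : ℚ))) = 0 from rfl] at hv
    have hdQ : ((n : ℚ) * a - 1) ≠ 0 := by
      have h0 : ((n * a - 1 : ℤ) : ℚ) ≠ 0 := Int.cast_ne_zero.mpr hdZ
      push_cast at h0
      exact h0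
    have hnQ : ((n : ℚ)) ^ 2 ≠ 0 := pow_ne_zero _ (by exact_mod_cast (by omega : n ≠ 0))
    exact (div_ne_zero hnQ hdQ) hv.symm
  obtain ⟨hp, hq⟩ := ksb_extract l n a h2 hl ha han hcop hv
  exact ksb_main n.toNat l n a (by omega) h2 hl ha han hcop hp hq
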